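/- If a_e ≤ a_l (the ego vehicle's braking capacity does not exceed the lead vehicle's), then the minimum safety distance reduces to the endpoint enumeration: sup_{ε ≥ 0} J(ε) = max(0, v_e·φ + v_e²/(2a_e) − v_l²/(2a_l)). -/
import Mathlib


open intervalIntegral

lemma hasDerivAt_sq_max (x : ℝ) :
    HasDerivAt (fun y : ℝ => max y 0 ^ 2) (2 * max x 0) x := by
  rcases lt_trichotomy x 0 with hx | hx | hx
  · have h : HasDerivAt (fun _ : ℝ => (0:ℝ)) 0 x := hasDerivAt_const x 0
    have he : (fun y : ℝ => max y 0 ^ 2) =ᶠ[nhds x] fun _ => (0:ℝ) := by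
      filter_upwards [Iio_mem_nhds hx] with y hy
      have : y < 0 := hy
      simp [max_eq_right this.le]
    have := h.congr_of_eventuallyEq he
    simpa [max_eq_right hx.le] using this
  · subst hx
    rw [hasDerivAt_iff_isLittleO]
    rw [Asymptotics.isLittleO_iff]
    intro c hc
    filter_upwards [Metric.ball_mem_nhds 0 hc] with y hy
    simp only [Metric.mem_ball, Real.dist_eq, sub_zero] at hy
    have h1 : max y 0 ^ 2 ≤ y ^ 2 := by
      rcases le_or_gt y 0 with h | h
      · rw [max_eq_right h]; simpa using sq_nonneg y
      · rw [max_eq_left h.le]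
    have h2 : (0:ℝ) ≤ max y 0 ^ 2 := by positivity
    have hs : max (0:ℝ) 0 = 0 := by simp
    simp only [hs, sub_zero, smul_zero, mul_zero, Real.norm_eq_abs]
    have h0 : ((0:ℝ)) ^ 2 = 0 := by norm_num
    rw [h0, sub_zero, abs_of_nonneg h2]
    calc max y 0 ^ 2 ≤ y ^ 2 := h1
      _ = |y| * |y| := by rw [← abs_mul]; rw [abs_of_nonneg (mul_self_nonneg y)]; ring
      _ ≤ c * |y| := by nlinarith [abs_nonneg y]
  · have h : HasDerivAt (fun y : ℝ => y ^ 2) (2 * x) x := by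
      simpa using (hasDerivAt_pow 2 x)
    have he : (fun y : ℝ => max y 0 ^ 2) =ᶠ[nhds x] fun y => y ^ 2 := by
      filter_upwards [Ioi_mem_nhds hx] with y hy
      have : 0 < y := hy
      simp [max_eq_left this.le]
    have := h.congr_of_eventuallyEq he
    simpa [max_eq_left hx.le] using this

lemma hasDerivAt_FL (vl al : ℝ) (hal : 0 < al) (τ : ℝ) :
    HasDerivAt (fun t : ℝ => (vl^2 - max (vl - al*t) 0 ^2)/(2*al))
      (max (vl - al*τ) 0) τ := by
  have h1 : HasDerivAt (fun t : ℝ => vl - al*t) (-al) τ := by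
    simpa using ((hasDerivAt_id τ).const_mul al).const_sub vl
  have h2 := (hasDerivAt_sq_max (vl - al*τ)).comp τ h1
  have h3 := ((hasDerivAt_const τ (vl^2)).sub h2).div_const (2*al)
  have hv : (0 - 2 * max (vl - al*τ) 0 * -al)/(2*al) = max (vl - al*τ) 0 := by
    field_simp
    ring
  rw [hv] at h3
  exact h3

lemma hasDerivAt_FE (ve ae φ : ℝ) (hve : 0 ≤ ve) (hae : 0 < ae) (τ : ℝ) :
    HasDerivAt (fun t : ℝ => ve*t - ve * max (t-φ) 0
        + (ve^2 - max (ve - ae * max (t-φ) 0) 0 ^2)/(2*ae))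
      (if τ < φ then ve else max (ve - ae * (τ - φ)) 0) τ := by
  rcases lt_trichotomy τ φ with hτ | hτ | hτ
  · rw [if_pos hτ]
    have h : HasDerivAt (fun t : ℝ => ve*t) ve τ := by
      simpa using (hasDerivAt_id τ).const_mul ve
    apply h.congr_of_eventuallyEq
    filter_upwards [Iio_mem_nhds hτ] with t ht
    have ht' : t < φ := ht
    simp [max_eq_right (by linarith : t - φ ≤ 0), max_eq_left hve]
  · subst hτ
    rw [if_neg (lt_irrefl τ)]
    rw [sub_self, mul_zero, sub_zero, max_eq_left hve]
    rw [hasDerivAt_iff_isLittleO, Asymptotics.isLittleO_iff]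
    intro c hc
    filter_upwards [Metric.ball_mem_nhds τ (show (0:ℝ) < 2*c/ae by positivity)] with t ht
    rw [Metric.mem_ball, Real.dist_eq] at ht
    set m := max (t - τ) 0 with hm
    set Q := max (ve - ae * m) 0 with hQ
    have hm0 : (0:ℝ) ≤ m := le_max_right _ _
    have hmabs : m ≤ |t - τ| := max_le (le_abs_self _) (abs_nonneg _)
    have hFEφ : ve*τ - ve * max (τ-τ) 0
        + (ve^2 - max (ve - ae * max (τ-τ) 0) 0 ^2)/(2*ae) = ve*τ := by
      simp [max_eq_left hve]
    have hkey : |(-(ve*m) + (ve^2 - Q^2)/(2*ae))| ≤ ae/2 * m^2 := by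
      rcases le_or_gt (ae*m) ve with h | h
      · have hQe : Q = ve - ae*m := max_eq_left (by linarith)
        have : -(ve*m) + (ve^2 - Q^2)/(2*ae) = -(ae/2*m^2) := by
          rw [hQe]; field_simp; ring
        rw [this, abs_neg, abs_of_nonneg (by positivity)]
      · have hQe : Q = 0 := max_eq_right (by linarith)
        rw [hQe]
        rw [abs_le]
        constructor
        · rw [← sub_nonneg]
          have : -(ve*m) + (ve^2 - 0^2)/(2*ae) - -(ae/2*m^2) = (ae*m - ve)^2/(2*ae) := by
            field_simp; ring
          rw [this]; positivity
        · rw [← sub_nonneg]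
          have : ae/2*m^2 - (-(ve*m) + (ve^2 - 0^2)/(2*ae)) = (ae^2*m^2 + 2*ae*ve*m - ve^2)/(2*ae) := by
            field_simp; ring
          rw [this]
          apply div_nonneg _ (by positivity)
          nlinarith [mul_self_le_mul_self hve h.le]
    have heq : ve*t - ve*m + (ve^2 - Q^2)/(2*ae) - (ve*τ) - (t - τ) • ve
        = -(ve*m) + (ve^2 - Q^2)/(2*ae) := by
      rw [smul_eq_mul]; ring
    rw [hFEφ, heq]
    rw [Real.norm_eq_abs, Real.norm_eq_abs]
    calc |(-(ve*m) + (ve^2 - Q^2)/(2*ae))| ≤ ae/2 * m^2 := hkey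
      _ ≤ ae/2 * (abs (t-τ) * abs (t-τ)) := by
          nlinarith [mul_le_mul hmabs hmabs hm0 (abs_nonneg (t-τ)), hae.le]
      _ ≤ c * |t-τ| := by
          have ht' : |t - τ| * ae < 2*c := (lt_div_iff₀ hae).mp ht
          nlinarith [abs_nonneg (t-τ), hae]
  · rw [if_neg (not_lt.2 hτ.le)]
    have h1 : HasDerivAt (fun t : ℝ => ve - ae*(t-φ)) (-ae) τ := by
      simpa using (((hasDerivAt_id τ).sub_const φ).const_mul ae).const_sub ve
    have h2 := (hasDerivAt_sq_max (ve - ae*(τ-φ))).comp τ h1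
    have h3 := ((hasDerivAt_const τ (ve^2)).sub h2).div_const (2*ae)
    have h4 : HasDerivAt (fun t : ℝ => ve*t - ve*(t-φ)
        + (ve^2 - max (ve - ae*(t-φ)) 0 ^2)/(2*ae))
        (ve*1 - ve*1 + (0 - 2 * max (ve - ae*(τ-φ)) 0 * -ae)/(2*ae)) τ := by
      exact (((hasDerivAt_id τ).const_mul ve).sub
        (((hasDerivAt_id τ).sub_const φ).const_mul ve)).add h3
    have h5 : HasDerivAt (fun t : ℝ => ve*t - ve*(t-φ)
        + (ve^2 - max (ve - ae*(t-φ)) 0 ^2)/(2*ae)) (max (ve - ae*(τ-φ)) 0) τ := by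
      convert h4 using 1
      field_simp
      ring
    apply h5.congr_of_eventuallyEq
    filter_upwards [Ioi_mem_nhds hτ] with t ht
    have ht' : φ < t := ht
    rw [max_eq_left (by linarith : (0:ℝ) ≤ t - φ)]

set_option maxHeartbeats 1000000 in
lemma aux_ub (vl ve al ae φ ε : ℝ) (hvl : 0 ≤ vl) (hve : 0 ≤ ve) (hal : 0 < al) (hae : 0 < ae)
    (hφ : 0 ≤ φ) (hε : 0 ≤ ε) (hle : ae ≤ al) :
    ve*ε - ve * max (ε-φ) 0 + (ve^2 - max (ve - ae * max (ε-φ) 0) 0 ^2)/(2*ae)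
      - (vl^2 - max (vl - al*ε) 0 ^2)/(2*al)
    ≤ max 0 (ve*φ + ve^2/(2*ae) - vl^2/(2*al)) := by
  have hae' : (ae:ℝ) ≠ 0 := hae.ne'
  have hal' : (al:ℝ) ≠ 0 := hal.ne'
  rcases le_or_gt vl (al*ε) with hp | hp
  · -- lead stopped: p = 0, bound by S
    rw [max_eq_right (by linarith : vl - al*ε ≤ 0)]
    apply le_trans _ (le_max_right _ _)
    set m := max (ε-φ) 0 with hm
    set q := max (ve - ae * m) 0 with hq
    have h1 : 0 ≤ ve*(φ - ε + m) := mul_nonneg hve (by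
      have := le_max_left (ε-φ) (0:ℝ); rw [← hm] at this; linarith)
    have h2 : 0 ≤ q^2/(2*ae) := by positivity
    have key : ve*φ + ve^2/(2*ae) - vl^2/(2*al)
        - (ve*ε - ve*m + (ve^2 - q^2)/(2*ae) - (vl^2 - 0^2)/(2*al))
        = ve*(φ - ε + m) + q^2/(2*ae) := by ring
    linarith
  · rw [max_eq_left (by linarith : (0:ℝ) ≤ vl - al*ε)]
    rcases lt_or_ge ε φ with hεφ | hεφ
    · -- before delay ends
      rw [max_eq_right (by linarith : ε - φ ≤ 0)]
      simp only [mul_zero, sub_zero, max_eq_left hve, sub_self, zero_div, add_zero]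
      rcases le_or_gt ve (vl - al*ε) with hv | hv
      · apply le_trans _ (le_max_left _ _)
        rw [← sub_nonneg]
        have key : 0 - (ve*ε - (vl^2 - (vl - al*ε)^2)/(2*al))
            = (2*al*ε*(vl - al*ε - ve) + al^2*ε^2)/(2*al) := by
          field_simp; ring
        rw [key]
        apply div_nonneg _ (by positivity)
        nlinarith [mul_nonneg hε (show (0:ℝ) ≤ vl - al*ε - ve by linarith), sq_nonneg (al*ε)]
      · apply le_trans _ (le_max_right _ _)
        rw [← sub_nonneg]
        have key : (ve*φ + ve^2/(2*ae) - vl^2/(2*al)) - (ve*ε - (vl^2 - (vl - al*ε)^2)/(2*al))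
            = ve*(φ-ε) + (al*ve^2 - ae*ve^2)/(2*(ae*al)) + (ve^2 - (vl-al*ε)^2)/(2*al) := by
          field_simp; ring
        rw [key]
        have t1 : 0 ≤ ve*(φ-ε) := mul_nonneg hve (by linarith)
        have t2 : 0 ≤ (al*ve^2 - ae*ve^2)/(2*(ae*al)) :=
          div_nonneg (by nlinarith [sq_nonneg ve]) (by positivity)
        have t3 : 0 ≤ (ve^2 - (vl-al*ε)^2)/(2*al) :=
          div_nonneg (by nlinarith) (by positivity)
        linarith
    · -- after delay ends
      rw [max_eq_left (by linarith : (0:ℝ) ≤ ε - φ)]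
      rcases le_or_gt ve (ae*(ε-φ)) with hq | hq
      · -- ego stopped, lead moving: ≤ 0
        rw [max_eq_right (by linarith : ve - ae*(ε-φ) ≤ 0)]
        apply le_trans _ (le_max_left _ _)
        rw [← sub_nonneg]
        have key : 0 - (ve*ε - ve*(ε-φ) + (ve^2 - 0^2)/(2*ae) - (vl^2 - (vl - al*ε)^2)/(2*al))
            = (2*(ae*al)*(vl*ε) - 2*(ae*al)*(ve*φ) - al*ve^2 - ae*al^2*ε^2)/(2*(ae*al)) := by
          field_simp; ring
        rw [key]
        apply div_nonneg _ (by positivity)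
        have B1 : ve^2 ≤ ae^2*(ε-φ)^2 := by nlinarith [mul_self_le_mul_self hve hq]
        have B2 : al*ve^2 ≤ ae*al^2*(ε-φ)^2 := by
          nlinarith [mul_le_mul_of_nonneg_left B1 hal.le,
            mul_le_mul_of_nonneg_right hle (mul_nonneg (mul_nonneg hae.le hal.le) (sq_nonneg (ε-φ)))]
        have B3 : ve*φ ≤ al*(ε-φ)*φ := by
          have h1 : ae*(ε-φ) ≤ al*(ε-φ) := mul_le_mul_of_nonneg_right hle (by linarith)
          nlinarith [mul_le_mul_of_nonneg_right hq hφ, mul_le_mul_of_nonneg_right h1 hφ]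
        have C1 : 2*(ae*al)*(ve*φ) ≤ 2*(ae*al)*(al*(ε-φ)*φ) :=
          mul_le_mul_of_nonneg_left B3 (by positivity)
        have C2 : 2*(ae*al)*(al*ε*ε) ≤ 2*(ae*al)*(vl*ε) :=
          mul_le_mul_of_nonneg_left (by nlinarith [mul_le_mul_of_nonneg_right hp.le hε]) (by positivity)
        have C3 : (0:ℝ) ≤ ae*al^2*φ^2 := by positivity
        linarith [C1, C2, C3, B2]
      · rw [max_eq_left (by linarith : (0:ℝ) ≤ ve - ae*(ε-φ))]
        rcases le_or_gt (vl - al*ε) (ve - ae*(ε-φ)) with hpq | hpq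
        · -- ego at least as fast: ≤ S
          apply le_trans _ (le_max_right _ _)
          rw [← sub_nonneg]
          have key : (ve*φ + ve^2/(2*ae) - vl^2/(2*al))
              - (ve*ε - ve*(ε-φ) + (ve^2 - (ve - ae*(ε-φ))^2)/(2*ae) - (vl^2 - (vl - al*ε)^2)/(2*al))
              = (al*(ve - ae*(ε-φ))^2 - ae*(vl - al*ε)^2)/(2*(ae*al)) := by
            field_simp; ring
          rw [key]
          apply div_nonneg _ (by positivity)
          have D1 : (vl - al*ε)^2 ≤ (ve - ae*(ε-φ))^2 := by
            nlinarith [mul_self_le_mul_self (show (0:ℝ) ≤ vl - al*ε by linarith) hpq]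
          nlinarith [mul_le_mul_of_nonneg_left D1 hal.le,
            mul_le_mul_of_nonneg_right hle (sq_nonneg (vl - al*ε))]
        · -- lead faster: ≤ 0
          apply le_trans _ (le_max_left _ _)
          rw [← sub_nonneg]
          have key : 0 - (ve*ε - ve*(ε-φ) + (ve^2 - (ve - ae*(ε-φ))^2)/(2*ae) - (vl^2 - (vl - al*ε)^2)/(2*al))
              = (2*(ae*al)*(vl*ε) - 2*(ae*al)*(ve*ε) - ae*al^2*ε^2 + ae^2*al*(ε-φ)^2)/(2*(ae*al)) := by
            field_simp; ring
          rw [key]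
          apply div_nonneg _ (by positivity)
          have E1 : ε*(al*ε - ae*(ε-φ)) ≤ ε*(vl - ve) :=
            mul_le_mul_of_nonneg_left (by linarith) hε
          have C1 : 2*(ae*al)*(ε*(al*ε - ae*(ε-φ))) ≤ 2*(ae*al)*(ε*(vl - ve)) :=
            mul_le_mul_of_nonneg_left E1 (by positivity)
          have C2 : (ae*al)*(ae*ε^2) ≤ (ae*al)*(al*ε^2) :=
            mul_le_mul_of_nonneg_left (mul_le_mul_of_nonneg_right hle (sq_nonneg ε)) (by positivity)
          have C3 : (0:ℝ) ≤ ae^2*al*φ^2 := by positivity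
          linarith [C1, C2, C3]

/-- If `a_e ≤ a_l`, the minimum safety distance reduces to the endpoint
enumeration: `sup_{ε ≥ 0} J(ε) = max(0, v_e·φ + v_e²/(2a_e) − v_l²/(2a_l))`. -/
theorem min_safety_distance_endpoint_case
    (vl ve al ae φ : ℝ)
    (hvl : 0 ≤ vl) (hve : 0 ≤ ve) (hal : 0 < al) (hae : 0 < ae) (hφ : 0 ≤ φ)
    (vL vE J : ℝ → ℝ)
    (hvL : ∀ τ, vL τ = max (vl - al * τ) 0)
    (hvE : ∀ τ, vE τ = if τ < φ then ve else max (ve - ae * (τ - φ)) 0)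
    (hJ : ∀ ε, J ε = ∫ τ in (0:ℝ)..ε, (vE τ - vL τ))
    (hle : ae ≤ al) :
    IsLUB (J '' {ε : ℝ | 0 ≤ ε})
      (max 0 (ve * φ + ve ^ 2 / (2 * ae) - vl ^ 2 / (2 * al))) := by
  have hderiv : ∀ t : ℝ, HasDerivAt (fun t : ℝ => (ve*t - ve * max (t-φ) 0
        + (ve^2 - max (ve - ae * max (t-φ) 0) 0 ^2)/(2*ae))
        - (vl^2 - max (vl - al*t) 0 ^2)/(2*al)) (vE t - vL t) t := by
    intro t
    rw [hvE, hvL]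
    exact (hasDerivAt_FE ve ae φ hve hae t).sub (hasDerivAt_FL vl al hal t)
  have hvE2 : ∀ t, vE t = max (ve - ae * max (t-φ) 0) 0 := by
    intro t
    rw [hvE]
    split_ifs with h
    · rw [max_eq_right (by linarith : t - φ ≤ 0), mul_zero, sub_zero, max_eq_left hve]
    · push_neg at h
      rw [max_eq_left (by linarith : (0:ℝ) ≤ t - φ)]
  have hcont : Continuous fun t => vE t - vL t := by
    have e : (fun t => vE t - vL t)
        = fun t => max (ve - ae * max (t-φ) 0) 0 - max (vl - al*t) 0 := by
      funext t; rw [hvE2, hvL]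
    rw [e]
    have c1 : Continuous fun t : ℝ => max (t-φ) 0 :=
      (continuous_id.sub continuous_const).max continuous_const
    have c2 : Continuous fun t : ℝ => max (ve - ae * max (t-φ) 0) 0 :=
      (continuous_const.sub (continuous_const.mul c1)).max continuous_const
    have c3 : Continuous fun t : ℝ => max (vl - al*t) 0 :=
      (continuous_const.sub (continuous_const.mul continuous_id)).max continuous_const
    exact c2.sub c3
  have hJF : ∀ ε : ℝ, J ε = ve*ε - ve * max (ε-φ) 0
      + (ve^2 - max (ve - ae * max (ε-φ) 0) 0 ^2)/(2*ae)
      - (vl^2 - max (vl - al*ε) 0 ^2)/(2*al) := by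
    intro ε
    rw [hJ]
    rw [intervalIntegral.integral_eq_sub_of_hasDerivAt (fun t _ => hderiv t)
      (hcont.intervalIntegrable 0 ε)]
    have h1 : max (-φ:ℝ) 0 = 0 := max_eq_right (by linarith)
    simp only [zero_sub, h1, mul_zero, sub_zero, max_eq_left hve, max_eq_left hvl]
    ring
  constructor
  · rintro y ⟨ε, hε, rfl⟩
    rw [hJF]
    exact aux_ub vl ve al ae φ ε hvl hve hal hae hφ hε hle
  · intro b hb
    rcases le_or_gt (ve * φ + ve ^ 2 / (2 * ae) - vl ^ 2 / (2 * al)) 0 with h | h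
    · rw [max_eq_left h]
      have h0 : J 0 = 0 := by
        rw [hJF]
        have h1 : max (-φ:ℝ) 0 = 0 := max_eq_right (by linarith)
        simp only [zero_sub, h1, mul_zero, sub_zero, max_eq_left hve, max_eq_left hvl]
        ring
      have := hb ⟨0, by simp, h0⟩
      linarith
    · rw [max_eq_right h.le]
      set ε0 := max (φ + ve/ae) (vl/al) with hε0
      have hε0a : φ + ve/ae ≤ ε0 := le_max_left _ _
      have hε0b : vl/al ≤ ε0 := le_max_right _ _
      have hva : (0:ℝ) ≤ ve/ae := div_nonneg hve hae.le
      have hε0pos : (0:ℝ) ≤ ε0 := by linarith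
      have h1 : max (ε0 - φ) 0 = ε0 - φ := max_eq_left (by linarith)
      have h2 : max (ve - ae*(ε0-φ)) 0 = 0 := max_eq_right (by
        have hx : ve/ae ≤ ε0 - φ := by linarith
        have := (div_le_iff₀ hae).mp hx
        nlinarith)
      have h3 : max (vl - al*ε0) 0 = 0 := max_eq_right (by
        have := (div_le_iff₀ hal).mp hε0b
        nlinarith)
      have hJ0 : J ε0 = ve * φ + ve ^ 2 / (2 * ae) - vl ^ 2 / (2 * al) := by
        rw [hJF, h1, h2, h3]
        ring
      exact hb ⟨ε0, hε0pos, hJ0⟩
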